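/- arXiv:2112.12279 — 3 statements merged into one kernel-verified Lean document; each statement's English description precedes it below -/
import Mathlib

section
/- For all real x in [-1/2, 1/2], 1 - 4x² ≤ H(1/2 - x), where H is the binary entropy function H(y) = -y·log₂(y) - (1-y)·log₂(1-y). -/
set_option maxHeartbeats 1000000

open Real

/-- Monotonicity-from-derivative helper on `[1, ∞)`. -/
lemma aux_mono {f f' : ℝ → ℝ} (hd : ∀ v : ℝ, 1 ≤ v → HasDerivAt f (f' v) v)
    (h0 : ∀ v : ℝ, 1 ≤ v → 0 ≤ f' v) (hf1 : f 1 = 0) {u : ℝ} (hu : 1 ≤ u) : 0 ≤ f u := by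
  have hmono : MonotoneOn f (Set.Ici 1) := by
    apply monotoneOn_of_deriv_nonneg (convex_Ici 1)
    · exact fun v hv => ((hd v hv).continuousAt).continuousWithinAt
    · intro v hv
      rw [interior_Ici] at hv
      exact ((hd v hv.le).differentiableAt).differentiableWithinAt
    · intro v hv
      rw [interior_Ici] at hv
      rw [(hd v hv.le).deriv]
      exact h0 v hv.le
  have h := hmono Set.self_mem_Ici (Set.mem_Ici.2 hu) hu
  rw [hf1] at h
  exact h

lemma g2_nonneg {u : ℝ} (hu : 1 ≤ u) :
    0 ≤ 2 * Real.log u - 3 + 4 * u⁻¹ - (u ^ 2)⁻¹ := by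
  apply aux_mono (f := fun v => 2 * Real.log v - 3 + 4 * v⁻¹ - (v ^ 2)⁻¹) (f' := fun v => 2 / v - 4 / v ^ 2 + 2 / v ^ 3) ?_ ?_ (by norm_num) hu
  · intro w hw
    have hw0 : (0:ℝ) < w := lt_of_lt_of_le one_pos hw
    have hne : w ≠ 0 := ne_of_gt hw0
    have H := ((((Real.hasDerivAt_log hne).const_mul 2).sub_const 3).add
        ((hasDerivAt_inv hne).const_mul 4)).sub
        ((hasDerivAt_pow 2 w).inv (pow_ne_zero 2 hne))
    refine H.congr_deriv ?_
    field_simp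
    ring
  · intro w hw
    have hw0 : (0:ℝ) < w := lt_of_lt_of_le one_pos hw
    show 0 ≤ 2 / w - 4 / w ^ 2 + 2 / w ^ 3
    have key : 2 / w - 4 / w ^ 2 + 2 / w ^ 3 = 2 * (w - 1) ^ 2 / w ^ 3 := by
      field_simp
      ring
    rw [key]
    positivity

lemma g1_nonneg {u : ℝ} (hu : 1 ≤ u) :
    0 ≤ (2 * u + 4) * Real.log u - 5 * u + 4 + u⁻¹ := by
  apply aux_mono (f := fun v => (2 * v + 4) * Real.log v - 5 * v + 4 + v⁻¹) (f' := fun v => 2 * Real.log v - 3 + 4 * v⁻¹ - (v ^ 2)⁻¹) ?_ ?_ (by norm_num) hu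
  · intro w hw
    have hw0 : (0:ℝ) < w := lt_of_lt_of_le one_pos hw
    have hne : w ≠ 0 := ne_of_gt hw0
    have H := (((((hasDerivAt_id w).const_mul 2).add_const 4).mul
        (Real.hasDerivAt_log hne)).sub (((hasDerivAt_id w).const_mul 5))).add_const 4 |>.add
        (hasDerivAt_inv hne)
    refine H.congr_deriv ?_
    simp only [id_eq, Pi.add_apply]
    field_simp
    ring
  · exact fun w hw => g2_nonneg hw

lemma g0_nonneg {u : ℝ} (hu : 1 ≤ u) :
    0 ≤ (u ^ 2 + 4 * u + 1) * Real.log u - 3 * (u ^ 2 - 1) := by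
  apply aux_mono (f := fun v => (v ^ 2 + 4 * v + 1) * Real.log v - 3 * (v ^ 2 - 1)) (f' := fun v => (2 * v + 4) * Real.log v - 5 * v + 4 + v⁻¹) ?_ ?_ (by norm_num) hu
  · intro w hw
    have hw0 : (0:ℝ) < w := lt_of_lt_of_le one_pos hw
    have hne : w ≠ 0 := ne_of_gt hw0
    have H := ((((hasDerivAt_pow 2 w).add (((hasDerivAt_id w).const_mul 4))).add_const 1).mul
        (Real.hasDerivAt_log hne)).sub (((hasDerivAt_pow 2 w).sub_const 1).const_mul 3)
    refine H.congr_deriv ?_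
    simp only [id_eq, Pi.add_apply]
    field_simp
    ring
  · exact fun w hw => g1_nonneg hw

/-- Gauss two-point lower bound for the logarithm. -/
lemma gauss_log {u : ℝ} (hu : 1 ≤ u) :
    3 * (u ^ 2 - 1) / (u ^ 2 + 4 * u + 1) ≤ Real.log u := by
  have hu0 : (0:ℝ) < u := lt_of_lt_of_le one_pos hu
  have hA : (0:ℝ) < u ^ 2 + 4 * u + 1 := by positivity
  rw [div_le_iff₀ hA]
  nlinarith [g0_nonneg hu]

/-- Trapezoid upper bound for the logarithm. -/
lemma trap_log {u : ℝ} (hu : 1 ≤ u) : Real.log u ≤ (u - u⁻¹) / 2 := by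
  have hu0 : (0:ℝ) < u := lt_of_lt_of_le one_pos hu
  have h := Real.self_le_sinh_iff.2 (Real.log_nonneg hu)
  rwa [Real.sinh_log hu0] at h

theorem key_entropy (p : ℝ) (h0 : 0 ≤ p) (h12 : p ≤ 1/2) :
    4 * Real.log 2 * (p * (1 - p)) ≤ Real.binEntropy p := by
  have L9 : (0.6931471803 : ℝ) < Real.log 2 := Real.log_two_gt_d9
  have L9' : Real.log 2 < 0.6931471808 := Real.log_two_lt_d9
  rcases eq_or_lt_of_le h0 with h|hp0
  · simp [← h]
  rcases le_or_gt p (1/4) with hc | hc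
  · -- pointwise Gauss bound
    have hp1 : p < 1 := by linarith
    have hq0 : (0:ℝ) < 1 - p := by linarith
    have hu1 : (1:ℝ) ≤ p⁻¹ := (one_le_inv₀ hp0).2 (by linarith)
    have hu2 : (1:ℝ) ≤ (1 - p)⁻¹ := (one_le_inv₀ hq0).2 (by linarith)
    have hg1 := gauss_log hu1
    have hg2 := gauss_log hu2
    have e1 : 3 * ((p⁻¹) ^ 2 - 1) / ((p⁻¹) ^ 2 + 4 * p⁻¹ + 1)
        = 3 * (1 - p ^ 2) / (1 + 4 * p + p ^ 2) := by
      rw [div_eq_div_iff (by positivity) (by positivity)]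
      field_simp
    have e2 : 3 * (((1-p)⁻¹) ^ 2 - 1) / (((1-p)⁻¹) ^ 2 + 4 * (1-p)⁻¹ + 1)
        = 3 * p * (2 - p) / (6 - 6 * p + p ^ 2) := by
      have hB : (0:ℝ) < 6 - 6 * p + p ^ 2 := by nlinarith
      rw [div_eq_div_iff (by positivity) (ne_of_gt hB)]
      field_simp
      ring
    rw [e1] at hg1
    rw [e2] at hg2
    have hEnt : Real.binEntropy p = p * Real.log p⁻¹ + (1 - p) * Real.log (1 - p)⁻¹ := rfl
    have hA : (0:ℝ) < 1 + 4 * p + p ^ 2 := by positivity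
    have hB : (0:ℝ) < 6 - 6 * p + p ^ 2 := by nlinarith
    have step1 : p * (3 * (1 - p ^ 2) / (1 + 4 * p + p ^ 2))
        + (1 - p) * (3 * p * (2 - p) / (6 - 6 * p + p ^ 2)) ≤ Real.binEntropy p := by
      rw [hEnt]
      gcongr
    refine le_trans ?_ step1
    have hsum : p * (3 * (1 - p ^ 2) / (1 + 4 * p + p ^ 2))
        + (1 - p) * (3 * p * (2 - p) / (6 - 6 * p + p ^ 2))
        = (p * (3 * (1 - p ^ 2)) * (6 - 6 * p + p ^ 2)
          + (1 - p) * (3 * p * (2 - p)) * (1 + 4 * p + p ^ 2)) / ((1 + 4 * p + p ^ 2) * (6 - 6 * p + p ^ 2)) := by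
      field_simp
      try ring
    rw [hsum, le_div_iff₀ (by positivity)]
    have hAB : (0:ℝ) ≤ (1 + 4 * p + p ^ 2) * (6 - 6 * p + p ^ 2) := le_of_lt (mul_pos hA hB)
    have hL69 : Real.log 2 ≤ 0.6932 := by linarith
    have hLB := mul_le_mul_of_nonneg_right hL69 hAB
    have hpoly : 4 * Real.log 2 * ((1 + 4 * p + p ^ 2) * (6 - 6 * p + p ^ 2))
        ≤ 3 * (8 + 7 * p - 7 * p ^ 2) := by
      nlinarith [hLB, sq_nonneg p, mul_nonneg h0 (show (0:ℝ) ≤ 1/4 - p by linarith),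
        mul_nonneg (mul_nonneg h0 h0) (show (0:ℝ) ≤ 1/4 - p by linarith),
        mul_nonneg (mul_nonneg (mul_nonneg h0 h0) h0) (show (0:ℝ) ≤ 1/4 - p by linarith)]
    calc 4 * Real.log 2 * (p * (1 - p)) * ((1 + 4 * p + p ^ 2) * (6 - 6 * p + p ^ 2))
        = (4 * Real.log 2 * ((1 + 4 * p + p ^ 2) * (6 - 6 * p + p ^ 2))) * (p * (1 - p)) := by ring
      _ ≤ (3 * (8 + 7 * p - 7 * p ^ 2)) * (p * (1 - p)) := by
          apply mul_le_mul_of_nonneg_right hpoly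
          nlinarith
      _ = p * (3 * (1 - p ^ 2)) * (6 - 6 * p + p ^ 2)
          + (1 - p) * (3 * p * (2 - p)) * (1 + 4 * p + p ^ 2) := by ring
  · -- monotone regime [1/4, 1/2]
    set L := Real.log 2 with hL
    have hanti : AntitoneOn (fun q => Real.binEntropy q - 4 * L * (q * (1 - q)))
        (Set.Icc (1/4 : ℝ) (1/2)) := by
      apply antitoneOn_of_deriv_nonpos (convex_Icc _ _)
      · apply ContinuousOn.sub
        · exact Real.binEntropy_continuous.continuousOn
        · fun_prop
      · intro q hq
        rw [interior_Icc] at hq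
        have hq0 : q ≠ 0 := by intro h; rw [h] at hq; norm_num at hq
        have hq1 : q ≠ 1 := by intro h; rw [h] at hq; norm_num at hq
        exact ((Real.differentiableAt_binEntropy hq0 hq1).sub (by fun_prop)).differentiableWithinAt
      · intro q hq
        rw [interior_Icc] at hq
        obtain ⟨hql, hqr⟩ := hq
        have hq0 : (0:ℝ) < q := by linarith
        have hq1 : q < 1 := by linarith
        have hD : HasDerivAt (fun q => Real.binEntropy q - 4 * L * (q * (1 - q)))
            (Real.log (1 - q) - Real.log q - 4 * L * (1 - 2 * q)) q := by
          have h1 := Real.hasDerivAt_binEntropy (ne_of_gt hq0) (ne_of_lt hq1)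
          have h2 : HasDerivAt (fun q : ℝ => 4 * L * (q * (1 - q))) (4 * L * (1 - 2 * q)) q := by
            have : HasDerivAt (fun q : ℝ => q * (1 - q)) (1 - 2 * q) q := by
              have h := ((hasDerivAt_id q).mul ((hasDerivAt_id q).const_sub 1))
              refine h.congr_deriv ?_
              simp only [id_eq]
              ring
            simpa using this.const_mul (4 * L)
          exact h1.sub h2
        rw [hD.deriv]
        -- show log(1-q) - log q ≤ 4L(1-2q)
        have hu1 : (1:ℝ) ≤ (1 - q) / q := by
          rw [le_div_iff₀ hq0]; linarith
        have htr := trap_log hu1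
        have hlog : Real.log (1 - q) - Real.log q = Real.log ((1 - q) / q) :=
          (Real.log_div (by linarith) (ne_of_gt hq0)).symm
        have hqne : q ≠ 0 := ne_of_gt hq0
        have hq1ne : (1:ℝ) - q ≠ 0 := by intro h; rw [sub_eq_zero] at h; exact (ne_of_lt hq1) h.symm
        have heval : ((1 - q) / q - ((1 - q) / q)⁻¹) / 2 = (1 - 2 * q) / (2 * q * (1 - q)) := by
          rw [inv_div]
          rw [div_eq_div_iff (by positivity) (ne_of_gt (by nlinarith : (0:ℝ) < 2 * q * (1 - q)))]
          field_simp
          ring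
        rw [hlog]
        have hfin : (1 - 2 * q) / (2 * q * (1 - q)) ≤ 4 * L * (1 - 2 * q) := by
          rw [div_le_iff₀ (mul_pos (by linarith : (0:ℝ) < 2 * q) (by linarith : (0:ℝ) < 1 - q))]
          have h316 : (3:ℝ)/16 ≤ q * (1 - q) := by nlinarith
          have hLpos : (0:ℝ) ≤ 8 * L * (1 - 2 * q) := by nlinarith
          nlinarith [mul_le_mul_of_nonneg_left h316 hLpos]
        have hchain : Real.log ((1 - q) / q) ≤ 4 * L * (1 - 2 * q) :=
          le_trans htr (heval ▸ hfin)
        linarith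
    have hmem1 : p ∈ Set.Icc (1/4 : ℝ) (1/2) := ⟨le_of_lt hc, h12⟩
    have hmem2 : (1/2 : ℝ) ∈ Set.Icc (1/4 : ℝ) (1/2) := by norm_num
    have := hanti hmem1 hmem2 h12
    have hhalf : Real.binEntropy (1/2 : ℝ) - 4 * L * ((1/2) * (1 - 1/2)) = 0 := by
      rw [show (1/2 : ℝ) = 2⁻¹ by norm_num, Real.binEntropy_two_inv]
      ring
    dsimp only at this
    linarith [this, hhalf]

/-- Entropy bound: for `x ∈ [-1/2, 1/2]`, `1 - 4x² ≤ H(1/2 - x)` where `H` is the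
binary entropy function with base-2 logarithms. -/
theorem entropy_bound (x : ℝ) (h1 : -(1/2) ≤ x) (h2 : x ≤ 1/2) :
    1 - 4 * x ^ 2 ≤
      -(1/2 - x) * Real.logb 2 (1/2 - x) - (1 - (1/2 - x)) * Real.logb 2 (1 - (1/2 - x)) := by
  set p := 1/2 - x with hp
  have h0 : 0 ≤ p := by rw [hp]; linarith
  have hp1 : p ≤ 1 := by rw [hp]; linarith
  have hkey : 4 * Real.log 2 * (p * (1 - p)) ≤ Real.binEntropy p := by
    rcases le_or_gt p (1/2) with h|h
    · exact key_entropy p h0 h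
    · have := key_entropy (1 - p) (by linarith) (by linarith)
      rw [Real.binEntropy_one_sub] at this
      calc 4 * Real.log 2 * (p * (1 - p)) = 4 * Real.log 2 * ((1-p) * (1 - (1-p))) := by ring
        _ ≤ Real.binEntropy p := this
  have hL : (0:ℝ) < Real.log 2 := Real.log_pos (by norm_num)
  have hEnt : Real.binEntropy p = -p * Real.log p - (1 - p) * Real.log (1 - p) := by
    simp only [Real.binEntropy, Real.log_inv]; ring
  have hgoal : -p * Real.logb 2 p - (1 - p) * Real.logb 2 (1 - p)
      = Real.binEntropy p / Real.log 2 := by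
    rw [Real.logb, Real.logb, hEnt]
    field_simp
  rw [hgoal, le_div_iff₀ hL]
  have hx : 1 - 4 * x ^ 2 = 4 * (p * (1 - p)) := by rw [hp]; ring
  calc (1 - 4 * x ^ 2) * Real.log 2 = 4 * Real.log 2 * (p * (1 - p)) := by rw [hx]; ring
    _ ≤ Real.binEntropy p := hkey
end

section
/- Let k ≥ 16 be a perfect square (so √k is an integer). Then the sum over integers i from k/2 - 2√k to k/2 - √k of C(k,i) is at least (√k/9)·C(k, k/2 - √k). -/
set_option maxHeartbeats 1000000

/-- For an even perfect square `k = r² ≥ 16`, the sum of `C(k,i)` for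
`i` from `k/2 - 2√k` to `k/2 - √k` is at least `(√k/9)·C(k, k/2 - √k)`. -/
theorem binom_sum_ge (k r : ℕ) (hk : 16 ≤ k) (hr : k = r ^ 2) (he : Even k) :
    ((r : ℝ) / 9) * (k.choose (k / 2 - r) : ℝ)
      ≤ ∑ i ∈ Finset.Icc (k / 2 - 2 * r) (k / 2 - r), (k.choose i : ℝ) := by
  set n := k / 2 with hn
  have h2n : 2 * n = k := Nat.two_mul_div_two_of_even he
  have hr4 : 4 ≤ r := by nlinarith [hr ▸ hk]
  have h2rn : 2 * r ≤ n := by nlinarith [h2n, hr]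
  set N : ℝ := (n : ℝ) with hN
  set R : ℝ := (r : ℝ) with hR
  have hR4 : (4:ℝ) ≤ R := by rw [hR]; exact_mod_cast hr4
  have h2RN : 2 * R ≤ N := by rw [hN, hR]; exact_mod_cast h2rn
  have h2NR : 2 * N = R ^ 2 := by
    have h : (2 * n : ℕ) = r ^ 2 := by omega
    rw [hN, hR]; exact_mod_cast h
  have hKN : (k : ℝ) = 2 * N := by rw [hN]; exact_mod_cast h2n.symm
  set q : ℝ := (N - 2 * R) / (N + 2 * R) with hq
  clear_value N R q
  have hden : (0:ℝ) < N + 2 * R := by nlinarith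
  have hq0 : 0 ≤ q := by rw [hq]; exact div_nonneg (by linarith) (by linarith)
  have hqr : q = (R - 4) / (R + 4) := by
    rw [hq, div_eq_div_iff hden.ne' (by linarith : (R + 4) ≠ 0)]
    nlinarith [h2NR]
  -- pointwise bound
  have key : ∀ j, j ≤ r → q ^ j * (k.choose (n - r) : ℝ) ≤ (k.choose (n - r - j) : ℝ) := by
    intro j
    induction j with
    | zero => intro _; simp
    | succ j ih =>
      intro hj
      have hj' : j ≤ r := Nat.le_of_succ_le hj
      have h1 := ih hj'
      set m : ℕ := n - r - j with hm
      clear_value m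
      have hm1 : 1 ≤ m := by omega
      have hmlb : n - 2 * r + 1 ≤ m := by omega
      have hmub : m ≤ k := by omega
      have hstep : q * (k.choose m : ℝ) ≤ (k.choose (m - 1) : ℝ) := by
        have hid0 := Nat.choose_succ_right_eq k (m - 1)
        have hm' : m - 1 + 1 = m := by omega
        rw [hm'] at hid0
        have hid : (k.choose m : ℝ) * (m:ℝ) = (k.choose (m-1) : ℝ) * ((k:ℝ) - (m:ℝ) + 1) := by
          have hmk : m - 1 ≤ k := by omega
          calc (k.choose m : ℝ) * (m:ℝ) = ((k.choose m * m : ℕ) : ℝ) := by push_cast; ring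
            _ = ((k.choose (m-1) * (k - (m-1)) : ℕ) : ℝ) := by rw [hid0]
            _ = (k.choose (m-1) : ℝ) * ((k:ℝ) - (m:ℝ) + 1) := by
                push_cast [Nat.cast_sub hmk, Nat.cast_sub hm1]; ring
        set M : ℝ := (m : ℝ) with hM
        clear_value M
        have hMlb : N - 2 * R + 1 ≤ M := by
          have h : ((n - 2*r + 1 : ℕ) : ℝ) ≤ M := by rw [hM]; exact_mod_cast hmlb
          have hcast : ((n - 2*r + 1 : ℕ) : ℝ) = N - 2*R + 1 := by
            rw [hN, hR]; push_cast [Nat.cast_sub h2rn]; ring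
          linarith [hcast ▸ h]
        have hMub : M ≤ (k:ℝ) := by rw [hM]; exact_mod_cast hmub
        have hD : (0:ℝ) < (k:ℝ) - M + 1 := by linarith
        have hqD : q * ((k:ℝ) - M + 1) ≤ M := by
          rw [hq, hKN, div_mul_eq_mul_div, div_le_iff₀ hden]
          nlinarith [mul_le_mul_of_nonneg_left hMlb (by linarith : (0:ℝ) ≤ 2*N)]
        have hC0 : (0:ℝ) ≤ (k.choose m : ℝ) := by positivity
        have h4' : (k.choose m : ℝ) * (q * ((k:ℝ) - M + 1)) ≤ (k.choose m : ℝ) * M :=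
          mul_le_mul_of_nonneg_left hqD hC0
        have h3 : q * (k.choose m : ℝ) * ((k:ℝ) - M + 1)
            ≤ (k.choose (m-1) : ℝ) * ((k:ℝ) - M + 1) := by
          linarith [h4', hid]
        exact le_of_mul_le_mul_right h3 hD
      have heq : n - r - (j + 1) = m - 1 := by omega
      rw [heq]
      calc q ^ (j+1) * (k.choose (n - r) : ℝ) = q * (q ^ j * (k.choose (n - r) : ℝ)) := by ring
        _ ≤ q * (k.choose m : ℝ) := mul_le_mul_of_nonneg_left h1 hq0
        _ ≤ (k.choose (m - 1) : ℝ) := hstep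
  -- reindex sum
  have himg : Finset.Icc (n - 2*r) (n - r) = (Finset.range (r+1)).image (fun j => n - r - j) := by
    ext i
    simp only [Finset.mem_Icc, Finset.mem_image, Finset.mem_range]
    constructor
    · rintro ⟨h1, h2⟩
      exact ⟨n - r - i, by omega, by omega⟩
    · rintro ⟨j, hj, rfl⟩
      omega
  have hinj : ∀ x ∈ Finset.range (r+1), ∀ y ∈ Finset.range (r+1),
      n - r - x = n - r - y → x = y := by
    intro x hx y hy h
    simp only [Finset.mem_range] at hx hy
    omega
  have hsum : ∑ i ∈ Finset.Icc (n - 2*r) (n - r), (k.choose i : ℝ)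
      = ∑ j ∈ Finset.range (r+1), (k.choose (n - r - j) : ℝ) := by
    rw [himg, Finset.sum_image hinj]
  -- geometric series bound
  have hgeom : (1 - q) * ∑ j ∈ Finset.range (r+1), q ^ j = 1 - q ^ (r+1) := by
    linear_combination (-1 : ℝ) * geom_sum_mul q (r+1)
  have hpow : q ^ (r+1) ≤ 1/9 := by
    rcases eq_or_lt_of_le hR4 with h4 | h4
    · have hq00 : q = 0 := by rw [hqr, ← h4]; simp
      rw [hq00, zero_pow (by omega)]; norm_num
    · have ha : (0:ℝ) < R - 4 := by linarith
      have hX : (9:ℝ) ≤ ((R + 4) / (R - 4)) ^ (r+1) := by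
        have hb : (R + 4) / (R - 4) = 1 + 8 / (R - 4) := by field_simp; ring
        have h0 : (0:ℝ) ≤ 8 / (R - 4) := by positivity
        have hbern := one_add_mul_le_pow (a := 8 / (R - 4)) (by linarith) (r+1)
        have h8 : (8:ℝ) ≤ ((r:ℝ) + 1) * (8 / (R - 4)) := by
          rw [mul_comm, div_mul_eq_mul_div, le_div_iff₀ ha]
          have : R = (r:ℝ) := hR
          nlinarith [this]
        rw [hb]
        push_cast at hbern
        linarith
      have hqinv : q = ((R + 4) / (R - 4))⁻¹ := by rw [hqr, inv_div]
      rw [hqinv, inv_pow]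
      have h9 := inv_anti₀ (by norm_num : (0:ℝ) < 9) hX
      norm_num at h9 ⊢
      linarith
  -- sum lower bound
  have hS0 : 0 ≤ ∑ j ∈ Finset.range (r+1), q ^ j :=
    Finset.sum_nonneg fun j _ => pow_nonneg hq0 j
  have hfact : (1 - q) * (R + 4) = 8 := by
    rw [hqr]; field_simp; norm_num
  have h8S : 8 * ∑ j ∈ Finset.range (r+1), q ^ j
      = (1 - q) * (R + 4) * ∑ j ∈ Finset.range (r+1), q ^ j := by rw [hfact]
  have hprod : (8/9) * (R + 4) ≤ (1 - q) * (∑ j ∈ Finset.range (r+1), q ^ j) * (R + 4) := by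
    have h89 : (8:ℝ)/9 ≤ (1 - q) * ∑ j ∈ Finset.range (r+1), q ^ j := by
      rw [hgeom]; linarith
    exact mul_le_mul_of_nonneg_right h89 (by linarith)
  have hS : R / 9 ≤ ∑ j ∈ Finset.range (r+1), q ^ j := by nlinarith [hprod, h8S]
  have hC0 : (0:ℝ) ≤ (k.choose (n - r) : ℝ) := by positivity
  calc R / 9 * (k.choose (n - r) : ℝ)
      ≤ (∑ j ∈ Finset.range (r+1), q ^ j) * (k.choose (n - r) : ℝ) :=
        mul_le_mul_of_nonneg_right hS hC0
    _ = ∑ j ∈ Finset.range (r+1), q ^ j * (k.choose (n - r) : ℝ) := Finset.sum_mul ..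
    _ ≤ ∑ j ∈ Finset.range (r+1), (k.choose (n - r - j) : ℝ) := by
        refine Finset.sum_le_sum fun j hj => key j ?_
        simp only [Finset.mem_range] at hj; omega
    _ = ∑ i ∈ Finset.Icc (n - 2*r) (n - r), (k.choose i : ℝ) := hsum.symm
end

section
/- Let k be a positive integer, ε̃ ∈ (0, 1/√k], p = 1/(e^ε̃+1), g(i) = p^k·e^{ε̃(k-i)}, p_avg = g(kp), and U = (k/ε̃)·ln(2e^ε̃/(e^ε̃+1)). Then for every real i with U - 2√k ≤ i ≤ U - √k/2: (g(i) - 2^{-k})·(k - 2i)/k ≥ (ε̃/2)·2^{-k}. -/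
/-- With `ε̃ ∈ (0, 1/√k]`, `p = 1/(e^ε̃+1)`, `g(i) = p^k·e^{ε̃(k-i)}` and
`U = (k/ε̃)·ln(2e^ε̃/(e^ε̃+1))`: for every real `i ∈ [U - 2√k, U - √k/2]`,
`(g(i) - 2^{-k})·(k-2i)/k ≥ (ε̃/2)·2^{-k}`. -/
theorem summand_lower_bound (k : ℕ) (hk : 0 < k) (ε : ℝ) (hε0 : 0 < ε)
    (hε1 : ε ≤ 1 / Real.sqrt k)
    (p : ℝ) (hp : p = 1 / (Real.exp ε + 1))
    (g : ℝ → ℝ) (hg : ∀ i : ℝ, g i = p ^ k * Real.exp (ε * ((k : ℝ) - i)))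
    (pavg : ℝ) (hpavg : pavg = g ((k : ℝ) * p))
    (U : ℝ) (hU : U = ((k : ℝ) / ε) * Real.log (2 * Real.exp ε / (Real.exp ε + 1)))
    (i : ℝ) (hi1 : U - 2 * Real.sqrt k ≤ i) (hi2 : i ≤ U - Real.sqrt k / 2) :
    (ε / 2) * (2 : ℝ) ^ (-(k : ℤ))
      ≤ (g i - (2 : ℝ) ^ (-(k : ℤ))) * (((k : ℝ) - 2 * i) / (k : ℝ)) := by
  have hεne : ε ≠ 0 := ne_of_gt hε0
  have hkpos : (0:ℝ) < (k:ℝ) := by exact_mod_cast hk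
  set A : ℝ := 2 * Real.exp ε / (Real.exp ε + 1) with hA
  have hEpos : (0:ℝ) < Real.exp ε + 1 := by positivity
  have hApos : 0 < A := by positivity
  have hs : 0 < Real.sqrt k := Real.sqrt_pos.mpr hkpos
  set s := Real.sqrt k with hsdef
  have hs2 : s * s = (k:ℝ) := Real.mul_self_sqrt (le_of_lt hkpos)
  have hT : (2:ℝ)^(-(k:ℤ)) = (1/2:ℝ)^k := by
    rw [zpow_neg, zpow_natCast, one_div, inv_pow]
  set T : ℝ := (1/2:ℝ)^k with hTdef
  have hTpos : 0 < T := by positivity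
  -- exp(ε U) = A ^ k
  have hexpU : Real.exp (ε * U) = A ^ k := by
    rw [hU]
    have h1 : ε * ((k:ℝ)/ε * Real.log A) = (k:ℝ) * Real.log A := by field_simp
    rw [h1]
    rw [show ((k:ℝ) * Real.log A) = ((k:ℕ) : ℝ) * Real.log A from rfl,
      Real.exp_nat_mul, Real.exp_log hApos]
  -- p^k * exp(ε k) = (1/2)^k * A^k
  have hkey : p ^ k * Real.exp (ε * (k:ℝ)) = T * A ^ k := by
    rw [hTdef, show (ε * (k:ℝ)) = ((k:ℕ):ℝ) * ε by push_cast; ring, Real.exp_nat_mul,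
      ← mul_pow, ← mul_pow]
    congr 1
    rw [hp, hA]
    field_simp
  -- g i = T * exp(ε (U - i))
  have hgi : g i = T * Real.exp (ε * (U - i)) := by
    rw [hg]
    have h1 : ε * ((k:ℝ) - i) = ε * (k:ℝ) + (-(ε * i)) := by ring
    have h2 : ε * (U - i) = ε * U + (-(ε * i)) := by ring
    rw [h1, h2, Real.exp_add, Real.exp_add, ← mul_assoc, hkey, hexpU]
    ring
  -- U ≤ k/2
  have hlogA : Real.log A ≤ ε / 2 := by
    rw [Real.log_le_iff_le_exp hApos, hA]
    rw [div_le_iff₀ hEpos]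
    have hx : Real.exp ε = Real.exp (ε/2) * Real.exp (ε/2) := by
      rw [← Real.exp_add]; ring_nf
    set x := Real.exp (ε/2) with hxdef
    have hxpos : 0 < x := Real.exp_pos _
    rw [hx]
    nlinarith [sq_nonneg (x - 1), hxpos]
  have hU2 : U ≤ (k:ℝ) / 2 := by
    rw [hU]
    calc (k:ℝ)/ε * Real.log A ≤ (k:ℝ)/ε * (ε/2) := by
          apply mul_le_mul_of_nonneg_left hlogA (by positivity)
      _ = (k:ℝ)/2 := by field_simp
  -- g i - T ≥ T * (ε * s / 2)
  have hd : s / 2 ≤ U - i := by linarith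
  have hexp_ge : 1 + ε * (s/2) ≤ Real.exp (ε * (U - i)) := by
    have h1 : ε * (s/2) ≤ ε * (U - i) := by
      apply mul_le_mul_of_nonneg_left hd (le_of_lt hε0)
    have h2 := Real.add_one_le_exp (ε * (U - i))
    linarith
  have hlow : T * (ε * s / 2) ≤ g i - T := by
    rw [hgi]
    have : T * (1 + ε * (s/2)) ≤ T * Real.exp (ε * (U - i)) :=
      mul_le_mul_of_nonneg_left hexp_ge (le_of_lt hTpos)
    nlinarith
  -- (k - 2i)/k ≥ 1/s
  have hi3 : i ≤ (k:ℝ)/2 - s/2 := by linarith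
  have hfrac : 1 / s ≤ ((k:ℝ) - 2*i) / (k:ℝ) := by
    rw [div_le_div_iff₀ hs hkpos]
    nlinarith
  -- combine
  have hgpos : 0 ≤ g i - T := by
    have h0 : 0 ≤ T * (ε * s / 2) := by positivity
    linarith
  have hmul := mul_le_mul hlow hfrac (by positivity) hgpos
  have heq : T * (ε * s / 2) * (1/s) = ε / 2 * T := by
    field_simp
  rw [hT]
  calc ε / 2 * T = T * (ε * s / 2) * (1/s) := heq.symm
    _ ≤ (g i - T) * (((k:ℝ) - 2*i)/(k:ℝ)) := hmul
end
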